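/- Let a be a positive integer and let n be an integer with 1 ≤ n ≤ a. Then s(n,1,-a) = (H_a - H_{a-n}) · a!/(a-n)!. -/
import Mathlib


/-- Non-central Stirling numbers of the first kind `s(n, k, α)`. -/
noncomputable def ncStirling : ℕ → ℕ → ℝ → ℝ
  | 0, 0, _ => 1
  | 0, _ + 1, _ => 0
  | n + 1, 0, α => (-α - n) * ncStirling n 0 α
  | n + 1, k + 1, α => ncStirling n k α + (-α - n) * ncStirling n (k + 1) α

/-- Harmonic number `H_n = 1 + 1/2 + ⋯ + 1/n`, `H_0 = 0`. -/
noncomputable def H (n : ℕ) : ℝ := ∑ k ∈ Finset.range n, (1 : ℝ) / (k + 1)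

lemma H_succ (m : ℕ) : H (m + 1) = H m + 1 / (m + 1) := by
  simp [H, Finset.sum_range_succ]

lemma ncStirling_zero (a : ℕ) : ∀ n, n ≤ a →
    ncStirling n 0 (-(a : ℝ)) = (a.factorial : ℝ) / ((a - n).factorial : ℝ) := by
  intro n
  induction n with
  | zero => intro _; simp [ncStirling, Nat.factorial_ne_zero]
  | succ n ih =>
    intro h
    have hn : n ≤ a := Nat.le_of_succ_le h
    rw [ncStirling, ih hn]
    have hm : a - n = (a - (n + 1)) + 1 := by omega
    rw [hm, Nat.factorial_succ]
    have hc : ((a - (n + 1) : ℕ) : ℝ) = (a : ℝ) - (n + 1) := by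
      push_cast [Nat.cast_sub h]; ring
    have h2 : ((a - (n + 1)).factorial : ℝ) ≠ 0 :=
      Nat.cast_ne_zero.2 (a - (n + 1)).factorial_ne_zero
    have h1 : ((a - (n + 1) : ℕ) : ℝ) + 1 ≠ 0 := by positivity
    push_cast
    rw [hc] at h1 ⊢
    field_simp
    ring

theorem ncStirling_one_neg_int_harmonic (a : ℕ) (ha : 0 < a) (n : ℕ)
    (h1 : 1 ≤ n) (h2 : n ≤ a) :
    ncStirling n 1 (-(a : ℝ)) =
      (H a - H (a - n)) * (a.factorial : ℝ) / ((a - n).factorial : ℝ) := by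
  induction n, h1 using Nat.le_induction with
  | base =>
    have hm : a = (a - 1) + 1 := by omega
    rw [show ncStirling 1 1 (-(a : ℝ)) = 1 by simp [ncStirling]]
    rw [hm, H_succ, Nat.factorial_succ]
    have h2 : (((a - 1) : ℕ).factorial : ℝ) ≠ 0 :=
      Nat.cast_ne_zero.2 (a - 1).factorial_ne_zero
    have h1 : ((a - 1 : ℕ) : ℝ) + 1 ≠ 0 := by positivity
    simp only [Nat.add_sub_cancel]
    push_cast
    field_simp
    ring
  | succ n hn ih =>
    have hna : n ≤ a := Nat.le_of_succ_le h2
    rw [ncStirling, ih hna, ncStirling_zero a n hna]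
    have hm : a - n = (a - (n + 1)) + 1 := by omega
    rw [hm, H_succ, Nat.factorial_succ]
    have hc : ((a - (n + 1) : ℕ) : ℝ) = (a : ℝ) - (n + 1) := by
      push_cast [Nat.cast_sub h2]; ring
    have hf : ((a - (n + 1)).factorial : ℝ) ≠ 0 :=
      Nat.cast_ne_zero.2 (a - (n + 1)).factorial_ne_zero
    have hp : ((a - (n + 1) : ℕ) : ℝ) + 1 ≠ 0 := by positivity
    push_cast
    rw [hc] at hp ⊢
    field_simp
    ring
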